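/- Let X be a finite connected T0 topological space such that every point x ∈ X satisfies #{y | y ⋖ x} + #{y | x ⋖ y} = 2, where ⋖ is the covering relation of the specialization order (i.e. every vertex of the Hasse diagram of X has unoriented degree 2). Then there exist a finite T0-space Y and continuous maps f : X → Y and g : Y → X with f ∘ g = id_Y, where Y is either the four-point space S or the space C_n for some n ≥ 2. -/

import Mathlib

/-- The specialisation order of a topological space: `x ⪯ y` iff `x ∈ closure {y}`. -/
def specLE {X : Type*} [TopologicalSpace X] (x y : X) : Prop := x ∈ closure ({y} : Set X)

/-- Strict specialisation: `x ≺ y`. -/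
def specLT {X : Type*} [TopologicalSpace X] (x y : X) : Prop := specLE x y ∧ x ≠ y

/-- The covering relation of the specialisation order: `x ⋖ y`. -/
def specCov {X : Type*} [TopologicalSpace X] (x y : X) : Prop :=
  specLT x y ∧ ¬ ∃ z, specLT x z ∧ specLT z y

/-- The unoriented degree of a vertex in the Hasse diagram of the specialisation order. -/
noncomputable def hasseDeg {X : Type*} [TopologicalSpace X] (x : X) : ℕ :=
  Nat.card {y : X // specCov y x} + Nat.card {y : X // specCov x y}

/-- The four-point space `S` (points indexed by `Fin 4`, with `i` denoting the point `i + 1`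
of `{1, 2, 3, 4}`): its open sets are `∅`, `{1}`, `{1,2}`, `{1,3}`, `{1,2,3}` and `{1,2,3,4}`,
i.e. the topology generated by `{1}`, `{1,2}`, `{1,3}`. -/
def topS : TopologicalSpace (Fin 4) :=
  TopologicalSpace.generateFrom {{0}, {0, 1}, {0, 2}}

/-- The space `C_n` on `{1, 2} × ℤ/nℤ` (with `{1, 2}` rendered as `Fin 2`): the Alexandrov
topology of the order generated by `(1, k) ≺ (2, k)` and `(1, k) ≺ (2, k+1)`, i.e. the
topology generated by the principal up-sets `{(2, k)}` and `{(1, k), (2, k), (2, k+1)}`. -/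
def topC (n : ℕ) : TopologicalSpace (Fin 2 × ZMod n) :=
  TopologicalSpace.generateFrom
    {s | (∃ k : ZMod n, s = {(1, k)}) ∨ ∃ k : ZMod n, s = {(0, k), (1, k), (1, k + 1)}}


set_option linter.unusedSectionVars false

open Set

section OrderBase
variable {X : Type*} [Finite X] [PartialOrder X]

/-- cover chain, upward -/
lemma exists_covby_le {x y : X} (h : x < y) : ∃ z, x ⋖ z ∧ z ≤ y := by
  classical
  have hfin : {z : X | x < z ∧ z ≤ y}.Finite := Set.toFinite _
  have hne : hfin.toFinset.Nonempty := ⟨y, by simp [h]⟩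
  obtain ⟨m, hm, hmin⟩ := hfin.toFinset.exists_minimal hne
  simp only [Set.Finite.mem_toFinset, Set.mem_setOf_eq] at hm
  refine ⟨m, ⟨hm.1, fun c hc1 hc2 => not_lt_of_ge (hmin ?_ hc2.le) hc2⟩, hm.2⟩
  simp only [Set.Finite.mem_toFinset, Set.mem_setOf_eq]
  exact ⟨hc1, le_of_lt (lt_of_lt_of_le hc2 hm.2)⟩

lemma exists_le_covby {x y : X} (h : x < y) : ∃ z, x ≤ z ∧ z ⋖ y := by
  classical
  have hfin : {z : X | x ≤ z ∧ z < y}.Finite := Set.toFinite _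
  have hne : hfin.toFinset.Nonempty := ⟨x, by simp [h, le_refl]⟩
  obtain ⟨m, hm, hmax⟩ := hfin.toFinset.exists_maximal hne
  simp only [Set.Finite.mem_toFinset, Set.mem_setOf_eq] at hm
  refine ⟨m, hm.1, hm.2, fun c hc1 hc2 => not_lt_of_ge (hmax ?_ hc1.le) hc1⟩
  simp only [Set.Finite.mem_toFinset, Set.mem_setOf_eq]
  exact ⟨le_of_lt (lt_of_le_of_lt hm.1 hc1), hc2⟩

lemma exists_max_ge (x : X) : ∃ m, x ≤ m ∧ IsMax m := by
  obtain ⟨m, hle, hmax⟩ := Finite.exists_le_maximal (p := (x ≤ ·)) (le_refl x)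
  exact ⟨m, hle, fun y hmy => hmax.2 (hmax.1.trans hmy) hmy⟩

lemma exists_min_le (x : X) : ∃ m, m ≤ x ∧ IsMin m := by
  obtain ⟨m, hle, hmin⟩ := Finite.exists_le_minimal (p := (· ≤ x)) (le_refl x)
  exact ⟨m, hle, fun y hmy => hmin.2 (hmy.trans hmin.1) hmy⟩

/-- a maximal element above `x`, chosen arbitrarily. -/
noncomputable def maxAbove (x : X) : X := (exists_max_ge x).choose

lemma le_maxAbove (x : X) : x ≤ maxAbove x := (exists_max_ge x).choose_spec.1
lemma isMax_maxAbove (x : X) : IsMax (maxAbove x) := (exists_max_ge x).choose_spec.2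

noncomputable def minBelow (x : X) : X := (exists_min_le x).choose
lemma minBelow_le (x : X) : minBelow x ≤ x := (exists_min_le x).choose_spec.1
lemma isMin_minBelow (x : X) : IsMin (minBelow x) := (exists_min_le x).choose_spec.2

lemma maxAbove_of_isMax {x : X} (h : IsMax x) : maxAbove x = x :=
  le_antisymm (h (le_maxAbove x)) (le_maxAbove x)

lemma minBelow_of_isMin {x : X} (h : IsMin x) : minBelow x = x :=
  le_antisymm (minBelow_le x) (h (minBelow_le x))

variable (hdeg : ∀ x : X, ({y | y ⋖ x}.ncard + {y | x ⋖ y}.ncard = 2))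
include hdeg

lemma not_min_max {x : X} (h1 : IsMin x) (h2 : IsMax x) : False := by
  have := hdeg x
  have e1 : {y | y ⋖ x} = ∅ := by
    ext y; simp only [mem_setOf_eq, mem_empty_iff_false, iff_false]
    exact fun hc => not_lt_of_ge (h1 hc.1.le) hc.1
  have e2 : {y | x ⋖ y} = ∅ := by
    ext y; simp only [mem_setOf_eq, mem_empty_iff_false, iff_false]
    exact fun hc => not_lt_of_ge (h2 hc.1.le) hc.1
  rw [e1, e2] at this; simp at this

lemma isMin_iff_down_empty {x : X} : IsMin x ↔ {y | y ⋖ x} = ∅ := by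
  constructor
  · intro h; ext y
    simp only [mem_setOf_eq, mem_empty_iff_false, iff_false]
    exact fun hc => not_lt_of_ge (h hc.1.le) hc.1
  · intro h hy hle
    rcases eq_or_lt_of_le hle with rfl | hlt
    · exact le_refl _
    · obtain ⟨z, _, hz⟩ := exists_le_covby hlt
      exact absurd (Set.eq_empty_iff_forall_notMem.mp h z) (by simp [hz])

lemma isMax_iff_up_empty {x : X} : IsMax x ↔ {y | x ⋖ y} = ∅ := by
  constructor
  · intro h; ext y
    simp only [mem_setOf_eq, mem_empty_iff_false, iff_false]
    exact fun hc => not_lt_of_ge (h hc.1.le) hc.1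
  · intro h hy hle
    rcases eq_or_lt_of_le hle with rfl | hlt
    · exact le_refl _
    · obtain ⟨z, hz, _⟩ := exists_covby_le hlt
      exact absurd (Set.eq_empty_iff_forall_notMem.mp h z) (by simp [hz])

omit hdeg in
lemma up_ncard_zero_iff {x : X} : {y | x ⋖ y}.ncard = 0 ↔ IsMax x := by
  rw [Set.ncard_eq_zero (Set.toFinite _)]
  constructor
  · intro h hy hle
    rcases eq_or_lt_of_le hle with rfl | hlt
    · exact le_refl _
    · obtain ⟨z, hz, _⟩ := exists_covby_le hlt
      exact absurd (Set.eq_empty_iff_forall_notMem.mp h z) (by simp [hz])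
  · intro h; ext y
    simp only [mem_setOf_eq, mem_empty_iff_false, iff_false]
    exact fun hc => not_lt_of_ge (h hc.1.le) hc.1

omit hdeg in
lemma down_ncard_zero_iff {x : X} : {y | y ⋖ x}.ncard = 0 ↔ IsMin x := by
  rw [Set.ncard_eq_zero (Set.toFinite _)]
  constructor
  · intro h hy hle
    rcases eq_or_lt_of_le hle with rfl | hlt
    · exact le_refl _
    · obtain ⟨z, _, hz⟩ := exists_le_covby hlt
      exact absurd (Set.eq_empty_iff_forall_notMem.mp h z) (by simp [hz])
  · intro h; ext y
    simp only [mem_setOf_eq, mem_empty_iff_false, iff_false]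
    exact fun hc => not_lt_of_ge (h hc.1.le) hc.1

/-- a minimal element has exactly two upper covers -/
lemma min_two_covers {p : X} (hp : IsMin p) :
    ∃ a b, a ≠ b ∧ {y | p ⋖ y} = {a, b} := by
  have h := hdeg p
  rw [(down_ncard_zero_iff).mpr hp] at h
  exact Set.ncard_eq_two.mp (by omega)

lemma max_two_covers {q : X} (hq : IsMax q) :
    ∃ a b, a ≠ b ∧ {y | y ⋖ q} = {a, b} := by
  have h := hdeg q
  rw [(up_ncard_zero_iff).mpr hq] at h
  exact Set.ncard_eq_two.mp (by omega)

/-- a non-minimal non-maximal element has a unique upper cover -/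
lemma mid_unique_up {x : X} (h1 : ¬ IsMin x) (h2 : ¬ IsMax x) :
    ∃ u, {y | x ⋖ y} = {u} := by
  have h := hdeg x
  have e1 : {y | y ⋖ x}.ncard ≠ 0 := fun hc => h1 (down_ncard_zero_iff.mp hc)
  have e2 : {y | x ⋖ y}.ncard ≠ 0 := fun hc => h2 (up_ncard_zero_iff.mp hc)
  exact Set.ncard_eq_one.mp (by omega)

lemma mid_unique_down {x : X} (h1 : ¬ IsMin x) (h2 : ¬ IsMax x) :
    ∃ u, {y | y ⋖ x} = {u} := by
  have h := hdeg x
  have e1 : {y | y ⋖ x}.ncard ≠ 0 := fun hc => h1 (down_ncard_zero_iff.mp hc)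
  have e2 : {y | x ⋖ y}.ncard ≠ 0 := fun hc => h2 (up_ncard_zero_iff.mp hc)
  exact Set.ncard_eq_one.mp (by omega)

/-- key uniqueness: every maximal element above a non-minimal element is `maxAbove x`. -/
lemma maxAbove_unique : ∀ x : X, ¬ IsMin x → ∀ q, IsMax q → x ≤ q → q = maxAbove x := by
  have wf : WellFoundedGT X := inferInstance
  intro x
  induction x using wf.wf.induction with
  | _ x IH =>
    intro hx q hq hxq
    by_cases hmx : IsMax x
    · rw [maxAbove_of_isMax hmx]
      exact le_antisymm (hmx hxq) hxq
    · obtain ⟨u, hu⟩ := mid_unique_up hdeg hx hmx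
      have hxu : x ⋖ u := by rw [Set.eq_singleton_iff_unique_mem] at hu; exact hu.1
      have humin : ¬ IsMin u := fun hc => not_lt_of_ge (hc hxu.1.le) hxu.1
      have step : ∀ r, IsMax r → x ≤ r → u ≤ r := by
        intro r hr hxr
        rcases eq_or_lt_of_le hxr with rfl | hlt
        · exact absurd hmx (by simp [hr])
        · obtain ⟨z, hz, hzr⟩ := exists_covby_le hlt
          have : z ∈ ({u} : Set X) := by rw [← hu]; exact hz
          rw [Set.mem_singleton_iff] at this; subst this; exact hzr
      have h1 := IH u hxu.1 humin q hq (step q hq hxq)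
      have h2 := IH u hxu.1 humin (maxAbove x) (isMax_maxAbove x)
        (step _ (isMax_maxAbove x) (le_maxAbove x))
      rw [h1, h2]

lemma minBelow_unique : ∀ x : X, ¬ IsMax x → ∀ q, IsMin q → q ≤ x → q = minBelow x := by
  have wf : WellFoundedLT X := inferInstance
  intro x
  induction x using wf.wf.induction with
  | _ x IH =>
    intro hx q hq hxq
    by_cases hmx : IsMin x
    · rw [minBelow_of_isMin hmx]
      exact le_antisymm hxq (hmx hxq)
    · obtain ⟨u, hu⟩ := mid_unique_down hdeg hmx hx
      have hxu : u ⋖ x := by rw [Set.eq_singleton_iff_unique_mem] at hu; exact hu.1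
      have humax : ¬ IsMax u := fun hc => not_lt_of_ge (hc hxu.1.le) hxu.1
      have step : ∀ r, IsMin r → r ≤ x → r ≤ u := by
        intro r hr hxr
        rcases eq_or_lt_of_le hxr with rfl | hlt
        · exact absurd hmx (by simp [hr])
        · obtain ⟨z, hzr, hz⟩ := exists_le_covby hlt
          have : z ∈ ({u} : Set X) := by rw [← hu]; exact hz
          rw [Set.mem_singleton_iff] at this; subst this; exact hzr
      have h1 := IH u hxu.1 humax q hq (step q hq hxq)
      have h2 := IH u hxu.1 humax (minBelow x) (isMin_minBelow x)
        (step _ (isMin_minBelow x) (minBelow_le x))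
      rw [h1, h2]

end OrderBase

section OrderBase2
open Set
variable {X : Type*} [Finite X] [PartialOrder X]
variable (hdeg : ∀ x : X, ({y | y ⋖ x}.ncard + {y | x ⋖ y}.ncard = 2))
include hdeg

lemma maxes_above_min {p a b : X} (hp : IsMin p) (hcov : {y | p ⋖ y} = {a, b}) :
    ∀ q, IsMax q → p ≤ q → q = maxAbove a ∨ q = maxAbove b := by
  intro q hq hpq
  rcases eq_or_lt_of_le hpq with rfl | hlt
  · exact (not_min_max hdeg hp hq).elim
  · obtain ⟨w, hw, hwq⟩ := exists_covby_le hlt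
    have hwmem : w ∈ ({a, b} : Set X) := by rw [← hcov]; exact hw
    have hwnm : ¬ IsMin w := fun h => not_lt_of_ge (h hw.1.le) hw.1
    rcases hwmem with h | h
    · left; rw [← h]; exact maxAbove_unique hdeg w hwnm q hq hwq
    · right; rw [← h]; exact maxAbove_unique hdeg w hwnm q hq hwq

lemma mins_below_max {q a b : X} (hq : IsMax q) (hcov : {y | y ⋖ q} = {a, b}) :
    ∀ p, IsMin p → p ≤ q → p = minBelow a ∨ p = minBelow b := by
  intro p hp hpq
  rcases eq_or_lt_of_le hpq with rfl | hlt
  · exact (not_min_max hdeg hp hq).elim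
  · obtain ⟨w, hpw, hw⟩ := exists_le_covby hlt
    have hwmem : w ∈ ({a, b} : Set X) := by rw [← hcov]; exact hw
    have hwnm : ¬ IsMax w := fun h => not_lt_of_ge (h hw.1.le) hw.1
    rcases hwmem with h | h
    · left; rw [← h]; exact minBelow_unique hdeg w hwnm p hp hpw
    · right; rw [← h]; exact minBelow_unique hdeg w hwnm p hp hpw

lemma two_maxes {p q q' : X} (hp : IsMin p) (hq : IsMax q) (hpq : p ≤ q)
    (hq' : IsMax q') (hpq' : p ≤ q') (hne : q ≠ q') :
    ∀ r, IsMax r → p ≤ r → r = q ∨ r = q' := by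
  obtain ⟨a, b, hab, hcov⟩ := min_two_covers hdeg hp
  have h1 := maxes_above_min hdeg hp hcov q hq hpq
  have h2 := maxes_above_min hdeg hp hcov q' hq' hpq'
  intro r hr hpr
  have h3 := maxes_above_min hdeg hp hcov r hr hpr
  rcases h3 with h3 | h3
  · rcases h1 with h1 | h1
    · exact Or.inl (h3.trans h1.symm)
    · rcases h2 with h2 | h2
      · exact Or.inr (h3.trans h2.symm)
      · exact absurd (h1.trans h2.symm) hne
  · rcases h1 with h1 | h1
    · rcases h2 with h2 | h2
      · exact absurd (h1.trans h2.symm) hne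
      · exact Or.inr (h3.trans h2.symm)
    · exact Or.inl (h3.trans h1.symm)

lemma two_mins {q p p' : X} (hq : IsMax q) (hp : IsMin p) (hpq : p ≤ q)
    (hp' : IsMin p') (hpq' : p' ≤ q) (hne : p ≠ p') :
    ∀ r, IsMin r → r ≤ q → r = p ∨ r = p' := by
  obtain ⟨a, b, hab, hcov⟩ := max_two_covers hdeg hq
  have h1 := mins_below_max hdeg hq hcov p hp hpq
  have h2 := mins_below_max hdeg hq hcov p' hp' hpq'
  intro r hr hpr
  have h3 := mins_below_max hdeg hq hcov r hr hpr
  rcases h3 with h3 | h3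
  · rcases h1 with h1 | h1
    · exact Or.inl (h3.trans h1.symm)
    · rcases h2 with h2 | h2
      · exact Or.inr (h3.trans h2.symm)
      · exact absurd (h1.trans h2.symm) hne
  · rcases h1 with h1 | h1
    · rcases h2 with h2 | h2
      · exact absurd (h1.trans h2.symm) hne
      · exact Or.inr (h3.trans h2.symm)
    · exact Or.inl (h3.trans h1.symm)

end OrderBase2

section OrderBase3
open Set
variable {X : Type*} [Finite X] [PartialOrder X]
variable (hdeg : ∀ x : X, ({y | y ⋖ x}.ncard + {y | x ⋖ y}.ncard = 2))
include hdeg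

lemma comparable_above : ∀ c : X, ¬IsMin c → ∀ a b, c ≤ a → c ≤ b → a ≤ b ∨ b ≤ a := by
  have wf : WellFoundedGT X := inferInstance
  intro c
  induction c using wf.wf.induction with
  | _ c IH =>
    intro hc a b hca hcb
    rcases eq_or_lt_of_le hca with rfl | hlta
    · exact Or.inl hcb
    rcases eq_or_lt_of_le hcb with rfl | hltb
    · exact Or.inr hca
    have hcnmax : ¬IsMax c := fun h => not_lt_of_ge (h hlta.le) hlta
    obtain ⟨u, hu⟩ := mid_unique_up hdeg hc hcnmax
    have hcu : c ⋖ u := by rw [Set.eq_singleton_iff_unique_mem] at hu; exact hu.1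
    have hau : u ≤ a := by
      obtain ⟨z, hz, hza⟩ := exists_covby_le hlta
      have hz' : z ∈ ({u} : Set X) := by rw [← hu]; exact hz
      rw [Set.mem_singleton_iff] at hz'
      exact hz' ▸ hza
    have hbu : u ≤ b := by
      obtain ⟨z, hz, hzb⟩ := exists_covby_le hltb
      have hz' : z ∈ ({u} : Set X) := by rw [← hu]; exact hz
      rw [Set.mem_singleton_iff] at hz'
      exact hz' ▸ hzb
    exact IH u hcu.1 (fun h => not_lt_of_ge (h hcu.1.le) hcu.1) a b hau hbu

/-- the dual diamond configuration yields a primal one -/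
lemma dual_diamond {q a b : X} (hq : IsMax q) (hab : a ≠ b) (hcov : {y | y ⋖ q} = {a, b})
    (hm : minBelow a = minBelow b) :
    ∃ p c d : X, IsMin p ∧ c ≠ d ∧ {y | p ⋖ y} = {c, d} ∧ maxAbove c = maxAbove d := by
  have haq : a ⋖ q := by
    have h' : a ∈ {y | y ⋖ q} := by rw [hcov]; exact Or.inl rfl
    exact h'
  have hbq : b ⋖ q := by
    have h' : b ∈ {y | y ⋖ q} := by rw [hcov]; exact Or.inr rfl
    exact h'
  have hnab : ¬ a ≤ b := by
    intro h
    rcases eq_or_lt_of_le h with rfl | hlt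
    · exact hab rfl
    · exact haq.2 hlt hbq.1
  have hnba : ¬ b ≤ a := by
    intro h
    rcases eq_or_lt_of_le h with rfl | hlt
    · exact hab rfl
    · exact hbq.2 hlt haq.1
  have hp : IsMin (minBelow a) := isMin_minBelow a
  have hpa : minBelow a < a := by
    rcases eq_or_lt_of_le (minBelow_le a) with h | h
    · exfalso; apply hnab; rw [← h, hm]; exact minBelow_le b
    · exact h
  have hpb : minBelow a < b := by
    rcases eq_or_lt_of_le (hm ▸ minBelow_le b) with h | h
    · exfalso; exact hnba (h ▸ minBelow_le a)
    · exact h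
  have hMa : maxAbove a = q :=
    (maxAbove_unique hdeg a (fun h => not_lt_of_ge (h hpa.le) hpa) q hq haq.1.le).symm
  have hMb : maxAbove b = q :=
    (maxAbove_unique hdeg b (fun h => not_lt_of_ge (h hpb.le) hpb) q hq hbq.1.le).symm
  obtain ⟨c, hc, hca⟩ := exists_covby_le hpa
  obtain ⟨d, hd, hdb⟩ := exists_covby_le hpb
  have hcnm : ¬ IsMin c := fun h => not_lt_of_ge (h hc.1.le) hc.1
  have hdnm : ¬ IsMin d := fun h => not_lt_of_ge (h hd.1.le) hd.1
  have hMc : maxAbove c = q := by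
    rcases eq_or_lt_of_le hca with rfl | h
    · exact hMa
    · rw [← hMa]
      exact (maxAbove_unique hdeg c hcnm (maxAbove a) (isMax_maxAbove a)
        (h.le.trans (le_maxAbove a))).symm
  have hMd : maxAbove d = q := by
    rcases eq_or_lt_of_le hdb with rfl | h
    · exact hMb
    · rw [← hMb]
      exact (maxAbove_unique hdeg d hdnm (maxAbove b) (isMax_maxAbove b)
        (h.le.trans (le_maxAbove b))).symm
  have hcd : c ≠ d := by
    rintro rfl
    rcases comparable_above hdeg c hcnm a b hca hdb with h | h
    · exact hnab h
    · exact hnba h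
  obtain ⟨u, v, huv, hcov2⟩ := min_two_covers hdeg hp
  have hcm : c = u ∨ c = v := by
    have h' : c ∈ ({u, v} : Set X) := by rw [← hcov2]; exact hc
    simpa using h'
  have hdm : d = u ∨ d = v := by
    have h' : d ∈ ({u, v} : Set X) := by rw [← hcov2]; exact hd
    simpa using h'
  refine ⟨minBelow a, u, v, hp, huv, hcov2, ?_⟩
  rcases hcm with h1 | h1 <;> rcases hdm with h2 | h2
  · exact absurd (h1.trans h2.symm) hcd
  · rw [← h1, ← h2, hMc, hMd]
  · rw [← h1, ← h2, hMd, hMc]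
  · exact absurd (h1.trans h2.symm) hcd

end OrderBase3

open Set

/-- order of the 4-point pseudo-circle: `3 < 1, 2 < 0`. -/
def dle : Fin 4 → Fin 4 → Prop := fun a b => a = b ∨ a = 3 ∨ b = 0

section Diamond
variable {X : Type*} [Finite X] [PartialOrder X]

theorem diamond_case (hdeg : ∀ x : X, ({y | y ⋖ x}.ncard + {y | x ⋖ y}.ncard = 2))
    {p a b : X} (hmin : IsMin p) (hab : a ≠ b) (hcov : {y | p ⋖ y} = {a, b})
    (hM : maxAbove a = maxAbove b) :
    ∃ f : X → Fin 4, ∃ g : Fin 4 → X,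
      (∀ x y, x ≤ y → dle (f x) (f y)) ∧ (∀ i j, dle i j → g i ≤ g j) ∧ f ∘ g = id := by
  classical
  obtain ⟨q, hq⟩ : ∃ q, q = maxAbove a := ⟨_, rfl⟩
  have hpa : p ⋖ a := by
    have : a ∈ {y | p ⋖ y} := by rw [hcov]; exact Or.inl rfl
    exact this
  have hpb : p ⋖ b := by
    have : b ∈ {y | p ⋖ y} := by rw [hcov]; exact Or.inr rfl
    exact this
  have hnab : ¬ a ≤ b := by
    intro h
    rcases eq_or_lt_of_le h with rfl | hlt
    · exact hab rfl
    · exact hpb.2 hpa.1 hlt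
  have hnba : ¬ b ≤ a := by
    intro h
    rcases eq_or_lt_of_le h with rfl | hlt
    · exact hab rfl
    · exact hpa.2 hpb.1 hlt
  have haq : a ≤ q := hq ▸ le_maxAbove a
  have hbq : b ≤ q := by rw [hq, hM]; exact le_maxAbove b
  have haltq : a < q := by
    rcases eq_or_lt_of_le haq with rfl | h
    · exact absurd hbq hnba
    · exact h
  have hbltq : b < q := by
    rcases eq_or_lt_of_le hbq with rfl | h
    · exact absurd haq hnab
    · exact h
  have hpq : p < q := lt_of_lt_of_le hpa.1 haq
  have hanmax : ¬ IsMax a := fun h => not_lt_of_ge (h haltq.le) haltq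
  have hbnmax : ¬ IsMax b := fun h => not_lt_of_ge (h hbltq.le) hbltq
  have below_cov : ∀ c : X, p ⋖ c → ¬ IsMax c → ∀ x, x < c → x = p := by
    intro c hpc hcm x hx
    obtain ⟨u, hu⟩ := mid_unique_down hdeg (fun h => not_lt_of_ge (h hpc.1.le) hpc.1) hcm
    have hup : u = p := by
      have : p ∈ ({u} : Set X) := by rw [← hu]; exact hpc
      exact (Set.mem_singleton_iff.mp this).symm
    obtain ⟨z, hxz, hzc⟩ := exists_le_covby hx
    have : z ∈ ({u} : Set X) := by rw [← hu]; exact hzc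
    rw [Set.mem_singleton_iff] at this
    subst this; rw [hup] at hxz
    exact le_antisymm hxz (hmin hxz)
  refine ⟨fun x => if x = p then 3 else if x = a then 1 else if x = b then 2 else 0,
    fun i => if i = 3 then p else if i = 1 then a else if i = 2 then b else q, ?_, ?_, ?_⟩
  · intro x y hxy
    rcases eq_or_lt_of_le hxy with rfl | hlt
    · exact Or.inl rfl
    by_cases hxp : x = p
    · simp only [hxp, if_pos rfl]; exact Or.inr (Or.inl rfl)
    have hyp : y ≠ p := by
      rintro rfl; exact not_lt_of_ge (hmin hlt.le) hlt
    by_cases hxa : x = a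
    · have hya : y ≠ a := by rw [← hxa]; exact hlt.ne'
      have hyb : y ≠ b := by rintro rfl; rw [hxa] at hlt; exact hnab hlt.le
      simp only [if_neg hxp, if_pos hxa, if_neg hyp, if_neg hya, if_neg hyb]
      exact Or.inr (Or.inr rfl)
    by_cases hxb : x = b
    · have hyb : y ≠ b := by rw [← hxb]; exact hlt.ne'
      have hya : y ≠ a := by rintro rfl; rw [hxb] at hlt; exact hnba hlt.le
      simp only [if_neg hxp, if_neg hxa, if_pos hxb, if_neg hyp, if_neg hya, if_neg hyb]
      exact Or.inr (Or.inr rfl)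
    · have hya : y ≠ a := fun h => hxp (below_cov a hpa hanmax x (h ▸ hlt))
      have hyb : y ≠ b := fun h => hxp (below_cov b hpb hbnmax x (h ▸ hlt))
      simp only [if_neg hxp, if_neg hxa, if_neg hxb, if_neg hyp, if_neg hya, if_neg hyb]
      exact Or.inl rfl
  · intro i j hij
    have hg : ∀ i : Fin 4, p ≤ (if i = 3 then p else if i = 1 then a else if i = 2 then b else q)
        ∧ (if i = 3 then p else if i = 1 then a else if i = 2 then b else q) ≤ q := by
      intro i
      fin_cases i
      · exact ⟨hpq.le, le_refl _⟩
      · exact ⟨hpa.1.le, haq⟩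
      · exact ⟨hpb.1.le, hbq⟩
      · exact ⟨le_refl _, hpq.le⟩
    rcases hij with rfl | h3 | h0
    · exact le_refl _
    · simp only [h3, if_pos rfl]; exact (hg j).1
    · rw [h0]; exact (hg i).2
  · funext i
    have hqp : q ≠ p := hpq.ne'
    have hqa : q ≠ a := haltq.ne'
    have hqb : q ≠ b := hbltq.ne'
    have hap : a ≠ p := hpa.1.ne'
    have hbp : b ≠ p := hpb.1.ne'
    have hba : b ≠ a := hab.symm
    fin_cases i <;> simp [hqp, hqa, hqb, hap, hbp, hba, hab]
end Diamond

/-- the crown order on `Fin 2 × ZMod n`. -/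
def cle (n : ℕ) : Fin 2 × ZMod n → Fin 2 × ZMod n → Prop :=
  fun p q => p = q ∨ (p.1 = 0 ∧ q.1 = 1 ∧ (q.2 = p.2 ∨ q.2 = p.2 + 1))

section Crown
open Set
variable {X : Type*} [Finite X] [Nonempty X] [PartialOrder X]

theorem crown_case (hdeg : ∀ x : X, ({y | y ⋖ x}.ncard + {y | x ⋖ y}.ncard = 2))
    (hconn : ∀ D : Set X, D.Nonempty → (∀ x ∈ D, ∀ y, x ⋖ y → y ∈ D) →
      (∀ x ∈ D, ∀ y, y ⋖ x → y ∈ D) → D = Set.univ)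
    (HA : ∀ (p a b : X), IsMin p → a ≠ b → {y | p ⋖ y} = {a, b} →
      maxAbove a ≠ maxAbove b)
    (HA' : ∀ (q a b : X), IsMax q → a ≠ b → {y | y ⋖ q} = {a, b} →
      minBelow a ≠ minBelow b) :
    ∃ n, 2 ≤ n ∧ ∃ f : X → Fin 2 × ZMod n, ∃ g : Fin 2 × ZMod n → X,
      (∀ x y, x ≤ y → cle n (f x) (f y)) ∧ (∀ i j, cle n i j → g i ≤ g j) ∧
      f ∘ g = id := by
  classical
  -- existence of the "other" max above a min
  have hexOM : ∀ p q : X, IsMin p → IsMax q → p ≤ q → ∃ r, IsMax r ∧ p ≤ r ∧ r ≠ q := by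
    intro p q hp hq hpq
    obtain ⟨a, b, hab, hcov⟩ := min_two_covers hdeg hp
    have hpa : p ⋖ a := by
      have h' : a ∈ {y | p ⋖ y} := by rw [hcov]; exact Or.inl rfl
      exact h'
    have hpb : p ⋖ b := by
      have h' : b ∈ {y | p ⋖ y} := by rw [hcov]; exact Or.inr rfl
      exact h'
    have hMab : maxAbove a ≠ maxAbove b := HA p a b hp hab hcov
    rcases maxes_above_min hdeg hp hcov q hq hpq with h | h
    · exact ⟨maxAbove b, isMax_maxAbove b, hpb.1.le.trans (le_maxAbove b),
        by rw [h]; exact hMab.symm⟩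
    · exact ⟨maxAbove a, isMax_maxAbove a, hpa.1.le.trans (le_maxAbove a),
        by rw [h]; exact hMab⟩
  have hexOm : ∀ q p : X, IsMax q → IsMin p → p ≤ q → ∃ r, IsMin r ∧ r ≤ q ∧ r ≠ p := by
    intro q p hq hp hpq
    obtain ⟨a, b, hab, hcov⟩ := max_two_covers hdeg hq
    have hpa : a ⋖ q := by
      have h' : a ∈ {y | y ⋖ q} := by rw [hcov]; exact Or.inl rfl
      exact h'
    have hpb : b ⋖ q := by
      have h' : b ∈ {y | y ⋖ q} := by rw [hcov]; exact Or.inr rfl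
      exact h'
    have hMab : minBelow a ≠ minBelow b := HA' q a b hq hab hcov
    rcases mins_below_max hdeg hq hcov p hp hpq with h | h
    · exact ⟨minBelow b, isMin_minBelow b, (minBelow_le b).trans hpb.1.le,
        by rw [h]; exact hMab.symm⟩
    · exact ⟨minBelow a, isMin_minBelow a, (minBelow_le a).trans hpa.1.le, by rw [h]; exact hMab⟩
  -- choice functions
  have hOMex : ∀ p q : X, ∃ r, IsMin p → IsMax q → p ≤ q → IsMax r ∧ p ≤ r ∧ r ≠ q := by
    intro p q
    by_cases h : IsMin p ∧ IsMax q ∧ p ≤ q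
    · obtain ⟨r, hr⟩ := hexOM p q h.1 h.2.1 h.2.2
      exact ⟨r, fun _ _ _ => hr⟩
    · exact ⟨p, fun h1 h2 h3 => absurd ⟨h1, h2, h3⟩ h⟩
  have hOmex : ∀ q p : X, ∃ r, IsMax q → IsMin p → p ≤ q → IsMin r ∧ r ≤ q ∧ r ≠ p := by
    intro q p
    by_cases h : IsMax q ∧ IsMin p ∧ p ≤ q
    · obtain ⟨r, hr⟩ := hexOm q p h.1 h.2.1 h.2.2
      exact ⟨r, fun _ _ _ => hr⟩
    · exact ⟨p, fun h1 h2 h3 => absurd ⟨h1, h2, h3⟩ h⟩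
  choose oM hoM using hOMex
  choose om hom using hOmex
  -- uniqueness
  have oM_eq : ∀ p q r : X, IsMin p → IsMax q → p ≤ q → IsMax r → p ≤ r → r ≠ q →
      r = oM p q := by
    intro p q r hp hq hpq hr hpr hrq
    obtain ⟨h1, h2, h3⟩ := hoM p q hp hq hpq
    rcases two_maxes hdeg hp hq hpq h1 h2 (Ne.symm h3) r hr hpr with h | h
    · exact absurd h hrq
    · exact h
  have om_eq : ∀ q p r : X, IsMax q → IsMin p → p ≤ q → IsMin r → r ≤ q → r ≠ p →
      r = om q p := by
    intro q p r hq hp hpq hr hpr hrp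
    obtain ⟨h1, h2, h3⟩ := hom q p hq hp hpq
    rcases two_mins hdeg hq hp hpq h1 h2 (Ne.symm h3) r hr hpr with h | h
    · exact absurd h hrp
    · exact h
  -- the walk
  set Inv : X × X → Prop := fun w => IsMin w.1 ∧ IsMax w.2 ∧ w.1 ≤ w.2 with hInvdef
  set stepf : X × X → X × X := fun w => (om w.2 w.1, oM (om w.2 w.1) w.2) with hstepdef
  set revf : X × X → X × X := fun w => (w.1, oM w.1 w.2) with hrevdef
  have hstep : ∀ w, Inv w → Inv (stepf w) ∧ (stepf w).1 ≠ w.1 ∧ (stepf w).2 ≠ w.2 ∧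
      (stepf w).1 ≤ w.2 := by
    rintro ⟨p, q⟩ ⟨h1, h2, h3⟩
    obtain ⟨m1, m2, m3⟩ := hom q p h2 h1 h3
    obtain ⟨M1, M2, M3⟩ := hoM (om q p) q m1 h2 m2
    exact ⟨⟨m1, M1, M2⟩, m3, M3, m2⟩
  have hrev : ∀ w, Inv w → Inv (revf w) ∧ (revf w).2 ≠ w.2 := by
    rintro ⟨p, q⟩ ⟨h1, h2, h3⟩
    obtain ⟨M1, M2, M3⟩ := hoM p q h1 h2 h3
    exact ⟨⟨h1, M1, M2⟩, M3⟩
  have hstepinj : ∀ w w', Inv w → Inv w' → stepf w = stepf w' → w = w' := by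
    rintro ⟨p, q⟩ ⟨p', q'⟩ ⟨h1, h2, h3⟩ ⟨h1', h2', h3'⟩ heq
    obtain ⟨m1, m2, m3⟩ := hom q p h2 h1 h3
    obtain ⟨M1, M2, M3⟩ := hoM (om q p) q m1 h2 m2
    obtain ⟨m1', m2', m3'⟩ := hom q' p' h2' h1' h3'
    obtain ⟨M1', M2', M3'⟩ := hoM (om q' p') q' m1' h2' m2'
    have e1 : om q p = om q' p' := congrArg Prod.fst heq
    have e2 : oM (om q p) q = oM (om q' p') q' := congrArg Prod.snd heq
    -- show q = q'
    have hq : q = q' := by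
      have ha : q = oM (om q p) (oM (om q p) q) :=
        oM_eq (om q p) (oM (om q p) q) q m1 M1 M2 h2 m2 (Ne.symm M3)
      have hb0 := oM_eq (om q' p') (oM (om q' p') q') q' m1' M1' M2' h2' m2' (Ne.symm M3')
      rw [← e2, ← e1] at hb0
      exact ha.trans hb0.symm
    subst hq
    have hp : p = p' := by
      have ha : p = om q (om q p) := by
        refine om_eq q (om q p) p h2 m1 m2 h1 h3 (Ne.symm m3)
      have hb : p' = om q (om q p) :=
        om_eq q (om q p) p' h2 m1 m2 h1' h3' (by rw [e1]; exact Ne.symm m3')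
      exact ha.trans hb.symm
    rw [hp]
  have hrevstep : ∀ w, Inv w → stepf (revf (stepf w)) = revf w := by
    rintro ⟨p, q⟩ ⟨h1, h2, h3⟩
    obtain ⟨m1, m2, m3⟩ := hom q p h2 h1 h3
    obtain ⟨M1, M2, M3⟩ := hoM (om q p) q m1 h2 m2
    have e1 : oM (om q p) (oM (om q p) q) = q :=
      (oM_eq (om q p) (oM (om q p) q) q m1 M1 M2 h2 m2 (Ne.symm M3)).symm
    have e2 : om q (om q p) = p :=
      (om_eq q (om q p) p h2 m1 m2 h1 h3 (Ne.symm m3)).symm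
    have h4 : revf (stepf (p, q)) = (om q p, q) := by
      show ((om q p), oM (om q p) (oM (om q p) q)) = (om q p, q)
      rw [e1]
    rw [h4]
    show (om q (om q p), oM (om q (om q p)) q) = (p, oM p q)
    rw [e2]
  -- base point
  obtain ⟨p0, _, hp0⟩ := exists_min_le (Classical.arbitrary X)
  have hz0 : Inv (p0, maxAbove p0) := ⟨hp0, isMax_maxAbove p0, le_maxAbove p0⟩
  set z0 : X × X := (p0, maxAbove p0) with hz0def
  set ζ : ℕ → X × X := fun t => stepf^[t] z0 with hζdef
  have hζ0 : ζ 0 = z0 := rfl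
  have hζsucc : ∀ t, ζ (t + 1) = stepf (ζ t) := fun t => Function.iterate_succ_apply' _ _ _
  have hInvζ : ∀ t, Inv (ζ t) := by
    intro t; induction t with
    | zero => exact hz0
    | succ t IH => rw [hζsucc]; exact (hstep _ IH).1
  have hcancel : ∀ k t s, ζ (t + k) = ζ (s + k) → ζ t = ζ s := by
    intro k; induction k with
    | zero => intro t s h; simpa using h
    | succ k IH =>
      intro t s h
      apply IH
      have h1 : t + (k + 1) = (t + k) + 1 := by omega
      have h2 : s + (k + 1) = (s + k) + 1 := by omega
      rw [h1, h2, hζsucc, hζsucc] at h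
      exact hstepinj _ _ (hInvζ _) (hInvζ _) h
  have hper : ∃ m, 0 < m ∧ ζ m = z0 := by
    obtain ⟨A, B, hABne, hABeq⟩ := Finite.exists_ne_map_eq_of_infinite ζ
    have key : ∀ u v : ℕ, u < v → ζ u = ζ v → ∃ m, 0 < m ∧ ζ m = z0 := by
      intro u v huv he
      refine ⟨v - u, by omega, ?_⟩
      have h := hcancel u (v - u) 0 (by rw [Nat.sub_add_cancel huv.le, Nat.zero_add]; exact he.symm)
      rw [h]; exact hζ0
    rcases Nat.lt_trichotomy A B with h | h | h
    · exact key A B h hABeq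
    · exact absurd h hABne
    · exact key B A h hABeq.symm
  set n := Nat.find hper with hndef
  have hn : 0 < n ∧ ζ n = z0 := Nat.find_spec hper
  have hn2 : 2 ≤ n := by
    rcases Nat.lt_or_ge n 2 with h | h
    · exfalso
      have h1 : n = 1 := by omega
      have h2 : ζ 1 = z0 := by rw [← h1]; exact hn.2
      rw [hζsucc 0, hζ0] at h2
      exact (hstep z0 hz0).2.1 (congrArg Prod.fst h2)
    · exact h
  haveI : NeZero n := ⟨by omega⟩
  haveI : Fact (1 < n) := ⟨by omega⟩
  have hplus : ∀ s, ζ (s + n) = ζ s := by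
    intro s
    show stepf^[s + n] z0 = stepf^[s] z0
    rw [Function.iterate_add_apply]
    exact congrArg _ hn.2
  have hmul : ∀ k s, ζ (s + n * k) = ζ s := by
    intro k; induction k with
    | zero => intro s; simp
    | succ k IH =>
      intro s
      have h1 : s + n * (k + 1) = (s + n * k) + n := by ring
      rw [h1, hplus, IH]
  have hmod : ∀ t, ζ (t % n) = ζ t := by
    intro t
    conv_rhs => rw [← Nat.mod_add_div t n]
    exact (hmul (t / n) (t % n)).symm
  set e : ZMod n → X × X := fun i => ζ i.val with hedef
  have hInve : ∀ i, Inv (e i) := fun i => hInvζ _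
  have hesucc : ∀ i : ZMod n, e (i + 1) = stepf (e i) := by
    intro i
    show ζ ((i + 1).val) = stepf (ζ i.val)
    rw [ZMod.val_add, ZMod.val_one, hmod, hζsucc]
  have heinj : ∀ i j : ZMod n, e i = e j → i = j := by
    have key2 : ∀ u v : ℕ, u < v → v < n → ζ u = ζ v → False := by
      intro u v huv hvn he
      have h := hcancel u (v - u) 0 (by rw [Nat.sub_add_cancel huv.le, Nat.zero_add]; exact he.symm)
      rw [hζ0] at h
      exact Nat.find_min hper (by omega : v - u < n) ⟨by omega, h⟩
    intro i j he
    by_contra hne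
    have hv : i.val ≠ j.val := by
      intro h
      apply hne
      rw [← ZMod.natCast_rightInverse i, ← ZMod.natCast_rightInverse j, h]
    rcases Nat.lt_trichotomy i.val j.val with h | h | h
    · exact key2 _ _ h (ZMod.val_lt j) he
    · exact hv h
    · exact key2 _ _ h (ZMod.val_lt i) he.symm
  have hstepP : ∀ i : ZMod n, (e (i + 1)).1 ≠ (e i).1 ∧ (e (i + 1)).2 ≠ (e i).2 ∧
      (e (i + 1)).1 ≤ (e i).2 := by
    intro i
    rw [hesucc]
    exact (hstep _ (hInve i)).2
  have noRel : ∀ A B : ZMod n, e A = revf (e B) → False := by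
    intro A B hAB
    have R : ∀ t : ℕ, e (A + t) = revf (e (B - t)) := by
      intro t; induction t with
      | zero => simpa using hAB
      | succ t IH =>
        have h1 : e (A + ((t : ℕ) + 1 : ℕ)) = stepf (e (A + t)) := by
          have harg : A + (((t : ℕ) + 1 : ℕ) : ZMod n) = (A + t) + 1 := by push_cast; ring
          rw [harg, hesucc]
        have h2 : e (B - t) = stepf (e (B - ((t : ℕ) + 1 : ℕ))) := by
          have harg : B - ((t : ℕ) : ZMod n) = (B - (((t : ℕ) + 1 : ℕ) : ZMod n)) + 1 := by
            push_cast; ring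
          rw [harg, hesucc]
        rw [h1, IH, h2, hrevstep _ (hInve _)]
    have RZ : ∀ c : ZMod n, e (A + c) = revf (e (B - c)) := by
      intro c
      have h := R c.val
      rwa [ZMod.natCast_rightInverse c] at h
    have hsolv : ∀ c : ZMod n, (∃ t : ZMod n, t + t = c) ∨ (∃ t : ZMod n, t + t = c + 1) := by
      intro c
      rcases Nat.even_or_odd c.val with ⟨k, hk⟩ | ⟨k, hk⟩
      · left
        refine ⟨(k : ZMod n), ?_⟩
        rw [← Nat.cast_add, ← hk, ZMod.natCast_rightInverse c]
      · right
        refine ⟨((k + 1 : ℕ) : ZMod n), ?_⟩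
        have h1 : (k + 1) + (k + 1) = c.val + 1 := by omega
        rw [← Nat.cast_add, h1, Nat.cast_add, Nat.cast_one, ZMod.natCast_rightInverse c]
    rcases hsolv (B - A) with ⟨t, ht⟩ | ⟨t, ht⟩
    · have hs : B - t = A + t := by linear_combination -ht
      have h := RZ t
      rw [hs] at h
      have h2 := congrArg Prod.snd h
      exact (hoM _ _ (hInve (A + t)).1 (hInve (A + t)).2.1 (hInve (A + t)).2.2).2.2 h2.symm
    · have hs : A + t = (B - t) + 1 := by linear_combination ht
      have h := RZ t
      rw [hs] at h
      have h2 := congrArg Prod.fst h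
      exact (hstepP (B - t)).1 h2
  have hPinj : ∀ i j : ZMod n, (e i).1 = (e j).1 → i = j := by
    intro i j hij
    by_contra hne
    have hqq : (e j).2 ≠ (e i).2 := by
      intro h
      exact hne (heinj i j (Prod.ext_iff.mpr ⟨hij, h.symm⟩))
    apply noRel j i
    refine Prod.ext_iff.mpr ⟨hij.symm, ?_⟩
    show (e j).2 = oM (e i).1 (e i).2
    refine oM_eq (e i).1 (e i).2 ((e j).2) (hInve i).1 (hInve i).2.1 (hInve i).2.2
      (hInve j).2.1 ?_ hqq
    rw [hij]; exact (hInve j).2.2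
  have hQinj : ∀ i j : ZMod n, (e i).2 = (e j).2 → i = j := by
    intro i j hij
    by_contra hne
    have hpp : (e j).1 ≠ (e i).1 := by
      intro h
      exact hne (heinj i j (Prod.ext_iff.mpr ⟨h.symm, hij⟩))
    apply noRel (i + 1) j
    rw [hesucc i]
    have h1 : om (e i).2 (e i).1 = (e j).1 := by
      refine (om_eq (e i).2 (e i).1 ((e j).1) (hInve i).2.1 (hInve i).1 (hInve i).2.2
        (hInve j).1 ?_ hpp).symm
      rw [hij]; exact (hInve j).2.2
    show (om (e i).2 (e i).1, oM (om (e i).2 (e i).1) (e i).2) = ((e j).1, oM (e j).1 (e j).2)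
    rw [h1, hij]
  -- the two maxes above each min of the cycle, and dually
  have maxes_above_P : ∀ (i : ZMod n) (r : X), IsMax r → (e i).1 ≤ r →
      r = (e i).2 ∨ r = (e (i - 1)).2 := by
    intro i r hr hir
    have harg : i - 1 + 1 = i := by ring
    have h1 : (e i).1 ≤ (e (i - 1)).2 := by
      have := (hstepP (i - 1)).2.2; rwa [harg] at this
    have h2 : (e i).2 ≠ (e (i - 1)).2 := by
      have := (hstepP (i - 1)).2.1; rwa [harg] at this
    exact two_maxes hdeg (hInve i).1 (hInve i).2.1 (hInve i).2.2 (hInve (i - 1)).2.1 h1 h2 r hr hir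
  have mins_below_Q : ∀ (i : ZMod n) (r : X), IsMin r → r ≤ (e i).2 →
      r = (e i).1 ∨ r = (e (i + 1)).1 := by
    intro i r hr hir
    exact two_mins hdeg (hInve i).2.1 (hInve i).1 (hInve i).2.2 (hInve (i + 1)).1
      (hstepP i).2.2 (Ne.symm (hstepP i).1) r hr hir
  -- coverage of the whole space
  set D : Set X := {x | (∃ i, x = (e i).1) ∨ (¬IsMin x ∧ ∃ i, maxAbove x = (e i).2)} with hDdef
  have hD : D = Set.univ := by
    apply hconn D ⟨(e 0).1, Or.inl ⟨0, rfl⟩⟩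
    · rintro x (⟨i, rfl⟩ | ⟨hnm, i, hM⟩) y hxy
      · refine Or.inr ⟨fun h => not_lt_of_ge (h hxy.1.le) hxy.1, ?_⟩
        have h1 : (e i).1 ≤ maxAbove y := hxy.1.le.trans (le_maxAbove y)
        rcases maxes_above_P i (maxAbove y) (isMax_maxAbove y) h1 with h | h
        · exact ⟨i, h⟩
        · exact ⟨i - 1, h⟩
      · refine Or.inr ⟨fun h => not_lt_of_ge (h hxy.1.le) hxy.1, i, ?_⟩
        have h1 : maxAbove y = maxAbove x :=
          maxAbove_unique hdeg x hnm (maxAbove y) (isMax_maxAbove y)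
            (hxy.1.le.trans (le_maxAbove y))
        exact h1.trans hM
    · rintro x (⟨i, rfl⟩ | ⟨hnm, i, hM⟩) y hyx
      · exact (not_lt_of_ge ((hInve i).1 hyx.1.le) hyx.1).elim
      · by_cases hy : IsMin y
        · have h1 : y ≤ (e i).2 := by
            rw [← hM]
            exact hyx.1.le.trans (le_maxAbove x)
          rcases mins_below_Q i y hy h1 with h | h
          · exact Or.inl ⟨i, h⟩
          · exact Or.inl ⟨i + 1, h⟩
        · refine Or.inr ⟨hy, i, ?_⟩
          have h1 : maxAbove x = maxAbove y :=
            maxAbove_unique hdeg y hy (maxAbove x) (isMax_maxAbove x)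
              (hyx.1.le.trans (le_maxAbove x))
          exact h1.symm.trans hM
  -- index functions
  have hmex : ∀ x : X, ∃ i : ZMod n, IsMin x → (e i).1 = x := by
    intro x
    by_cases h : IsMin x
    · have hx : x ∈ D := by rw [hD]; trivial
      rcases hx with ⟨i, hi⟩ | ⟨hn', _⟩
      · exact ⟨i, fun _ => hi.symm⟩
      · exact absurd h hn'
    · exact ⟨0, fun h' => absurd h' h⟩
  choose im him using hmex
  have hqex : ∀ x : X, ∃ i : ZMod n, ¬IsMin x → (e i).2 = maxAbove x := by
    intro x
    by_cases h : IsMin x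
    · exact ⟨0, fun h' => absurd h h'⟩
    · have hx : x ∈ D := by rw [hD]; trivial
      rcases hx with ⟨i, hi⟩ | ⟨_, i, hi⟩
      · exact absurd (by rw [hi]; exact (hInve i).1) h
      · exact ⟨i, fun _ => hi.symm⟩
  choose iq hiq using hqex
  have A1 : ∀ x, ¬IsMin x → ∀ i : ZMod n, maxAbove x = (e i).2 → iq x = i := by
    intro x h i hi
    exact hQinj _ _ ((hiq x h).trans hi)
  have A2 : ∀ i : ZMod n, im ((e i).1) = i := fun i => hPinj _ _ (him _ (hInve i).1)
  refine ⟨n, hn2, fun x => if IsMin x then ((0 : Fin 2), im x) else ((1 : Fin 2), iq x + 1),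
    fun y => if y.1 = 0 then (e y.2).1 else (e (y.2 - 1)).2, ?_, ?_, ?_⟩
  · -- monotonicity of f
    intro x y hxy
    rcases eq_or_lt_of_le hxy with rfl | hlt
    · exact Or.inl rfl
    have hny : ¬IsMin y := fun h => not_lt_of_ge (h hlt.le) hlt
    by_cases hx : IsMin x
    · have hex : (e (im x)).1 = x := him x hx
      have hmy : maxAbove y = (e (im x)).2 ∨ maxAbove y = (e (im x - 1)).2 :=
        maxes_above_P (im x) _ (isMax_maxAbove y)
          (by rw [hex]; exact hlt.le.trans (le_maxAbove y))
      simp only [if_pos hx, if_neg hny]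
      refine Or.inr ⟨rfl, rfl, ?_⟩
      rcases hmy with h | h
      · right
        rw [A1 y hny (im x) h]
      · left
        rw [A1 y hny (im x - 1) h]
        ring
    · have hqy : maxAbove y = maxAbove x :=
        maxAbove_unique hdeg x hx (maxAbove y) (isMax_maxAbove y)
          (hlt.le.trans (le_maxAbove y))
      have hiqeq : iq y = iq x := A1 y hny (iq x) (hqy.trans (hiq x hx).symm)
      simp only [if_neg hx, if_neg hny, hiqeq]
      exact Or.inl rfl
  · -- monotonicity of g
    rintro ⟨a, ka⟩ ⟨b, kb⟩ hc
    rcases hc with heq | ⟨h0, h1, hor⟩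
    · exact le_of_eq (by rw [heq])
    simp only at h0 h1
    simp only [h0, h1, if_pos rfl]
    have hne1 : (1 : Fin 2) ≠ 0 := by decide
    rw [if_neg hne1]
    rcases hor with h | h
    · simp only at h
      rw [h]
      have harg : ka - 1 + 1 = ka := by ring
      have := (hstepP (ka - 1)).2.2
      rwa [harg] at this
    · simp only at h
      rw [h]
      have harg : ka + 1 - 1 = ka := by ring
      rw [harg]
      exact (hInve ka).2.2
  · -- f ∘ g = id
    funext y
    obtain ⟨c, k⟩ := y
    by_cases hc : c = 0
    · subst hc
      show (if IsMin ((e k).1) then ((0 : Fin 2), im ((e k).1))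
        else ((1 : Fin 2), iq ((e k).1) + 1)) = ((0 : Fin 2), k)
      rw [if_pos (hInve k).1, A2 k]
    · have hc1 : c = 1 := by
        have h2 := c.isLt
        have h0 : c.val ≠ 0 := fun h => hc (Fin.ext h)
        exact Fin.ext (by simp; omega)
      subst hc1
      have hnm : ¬IsMin ((e (k - 1)).2) := fun h => not_min_max hdeg h (hInve (k - 1)).2.1
      show (if IsMin ((e (k - 1)).2) then ((0 : Fin 2), im ((e (k - 1)).2))
        else ((1 : Fin 2), iq ((e (k - 1)).2) + 1)) = ((1 : Fin 2), k)
      rw [if_neg hnm]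
      have h1 : iq ((e (k - 1)).2) = k - 1 :=
        A1 _ hnm (k - 1) (maxAbove_of_isMax (hInve (k - 1)).2.1)
      rw [h1]
      have harg : k - 1 + 1 = k := by ring
      rw [harg]
end Crown

section Topo
open Set TopologicalSpace

/-- the specialisation partial order of a T0 space -/
def specPO (X : Type*) [TopologicalSpace X] [T0Space X] : PartialOrder X where
  le := specLE
  le_refl x := subset_closure (Set.mem_singleton x)
  le_trans a b c hab hbc := by
    have h : closure ({b} : Set X) ⊆ closure ({c} : Set X) :=
      closure_minimal (Set.singleton_subset_iff.mpr hbc) isClosed_closure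
    exact h hab
  le_antisymm a b h1 h2 := by
    have hba : b ⤳ a := specializes_iff_mem_closure.mpr h1
    have hab : a ⤳ b := specializes_iff_mem_closure.mpr h2
    exact (hab.antisymm hba).eq

theorem stmt10' {X : Type*} [tX : TopologicalSpace X] [Finite X] [T0Space X] [ConnectedSpace X]
    (hdeg : ∀ x : X, hasseDeg x = 2) :
    (∃ f : X → Fin 4, ∃ g : Fin 4 → X,
      @Continuous X (Fin 4) tX topS f ∧ @Continuous (Fin 4) X topS tX g ∧ f ∘ g = id) ∨
    ∃ n : ℕ, 2 ≤ n ∧ ∃ f : X → Fin 2 × ZMod n, ∃ g : Fin 2 × ZMod n → X,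
      @Continuous X (Fin 2 × ZMod n) tX (topC n) f ∧
      @Continuous (Fin 2 × ZMod n) X (topC n) tX g ∧ f ∘ g = id := by
  classical
  letI po : PartialOrder X := specPO X
  haveI : Nonempty X := inferInstance
  have hLT : ∀ x y : X, specLT x y ↔ x < y := by
    intro x y
    constructor
    · rintro ⟨h1, h2⟩; exact lt_of_le_of_ne h1 h2
    · intro h; exact ⟨h.le, h.ne⟩
  have hCov : ∀ x y : X, specCov x y ↔ x ⋖ y := by
    intro x y
    constructor
    · rintro ⟨h1, h2⟩
      exact ⟨(hLT x y).mp h1, fun z hz1 hz2 => h2 ⟨z, (hLT x z).mpr hz1, (hLT z y).mpr hz2⟩⟩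
    · rintro ⟨h1, h2⟩
      refine ⟨(hLT x y).mpr h1, ?_⟩
      rintro ⟨z, hz1, hz2⟩
      exact h2 ((hLT x z).mp hz1) ((hLT z y).mp hz2)
  have hdeg' : ∀ x : X, ({y | y ⋖ x}.ncard + {y | x ⋖ y}.ncard = 2) := by
    intro x
    have h := hdeg x
    simp only [hasseDeg] at h
    have e1 : {y : X | y ⋖ x}.ncard = Nat.card {y : X // specCov y x} := by
      rw [← Nat.card_coe_set_eq]
      exact Nat.card_congr (Equiv.subtypeEquivRight (fun y => (hCov y x).symm))
    have e2 : {y : X | x ⋖ y}.ncard = Nat.card {y : X // specCov x y} := by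
      rw [← Nat.card_coe_set_eq]
      exact Nat.card_congr (Equiv.subtypeEquivRight (fun y => (hCov x y).symm))
    rw [e1, e2, h]
  have hopen_up : ∀ U : Set X, IsOpen U → ∀ x ∈ U, ∀ y, x ≤ y → y ∈ U := by
    intro U hU x hx y hxy
    have hxy' : x ∈ closure ({y} : Set X) := hxy
    obtain ⟨z, hz1, hz2⟩ := mem_closure_iff.mp hxy' U hU hx
    rw [Set.mem_singleton_iff] at hz2
    exact hz2 ▸ hz1
  have hup_open : ∀ U : Set X, (∀ x ∈ U, ∀ y, x ≤ y → y ∈ U) → IsOpen U := by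
    intro U hU
    rw [← isClosed_compl_iff]
    have hc : Uᶜ = ⋃ y ∈ Uᶜ, closure {y} := by
      ext z
      simp only [Set.mem_iUnion, exists_prop]
      constructor
      · intro hz; exact ⟨z, hz, subset_closure (Set.mem_singleton z)⟩
      · rintro ⟨y, hy, hzy⟩
        intro hzU
        exact hy (hU z hzU y hzy)
    rw [hc]
    exact Set.Finite.isClosed_biUnion (Set.toFinite _) (fun y _ => isClosed_closure)
  have hconn : ∀ D : Set X, D.Nonempty → (∀ x ∈ D, ∀ y, x ⋖ y → y ∈ D) →
      (∀ x ∈ D, ∀ y, y ⋖ x → y ∈ D) → D = Set.univ := by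
    intro D hne hupc hdownc
    have hupD : ∀ x, x ∈ D → ∀ y, x ≤ y → y ∈ D := by
      have wf : WellFoundedGT X := inferInstance
      intro x
      induction x using wf.wf.induction with
      | _ x IH =>
        intro hx y hxy
        rcases eq_or_lt_of_le hxy with rfl | hlt
        · exact hx
        obtain ⟨z, hz, hzy⟩ := exists_covby_le hlt
        exact IH z hz.1 (hupc x hx z hz) y hzy
    have hdownD : ∀ x, x ∈ D → ∀ y, y ≤ x → y ∈ D := by
      have wf : WellFoundedLT X := inferInstance
      intro x
      induction x using wf.wf.induction with
      | _ x IH =>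
        intro hx y hxy
        rcases eq_or_lt_of_le hxy with rfl | hlt
        · exact hx
        obtain ⟨z, hzy, hz⟩ := exists_le_covby hlt
        exact IH z hz.1 (hdownc x hx z hz) y hzy
    have hDopen : IsOpen D := hup_open D (fun x hx => hupD x hx)
    have hDclosed : IsClosed D := by
      rw [← isOpen_compl_iff]
      apply hup_open
      intro x hx y hxy hyD
      exact hx (hdownD y hyD x hxy)
    exact IsClopen.eq_univ ⟨hDclosed, hDopen⟩ hne
  by_cases hA : ∃ p a b : X, IsMin p ∧ a ≠ b ∧ {y | p ⋖ y} = {a, b} ∧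
      maxAbove a = maxAbove b
  · -- diamond case
    obtain ⟨p, a, b, h1, h2, h3, h4⟩ := hA
    obtain ⟨f, g, hf, hg, hfg⟩ := diamond_case hdeg' h1 h2 h3 h4
    have hdle0 : ∀ c : Fin 4, dle 0 c → c = 0 := by
      intro c h
      rcases h with h | h | h
      · exact h.symm
      · exact absurd h (by decide)
      · exact h
    have hdle1 : ∀ c : Fin 4, dle 1 c → c = 0 ∨ c = 1 := by
      intro c h
      rcases h with h | h | h
      · exact Or.inr h.symm
      · exact absurd h (by decide)
      · exact Or.inl h
    have hdle2 : ∀ c : Fin 4, dle 2 c → c = 0 ∨ c = 2 := by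
      intro c h
      rcases h with h | h | h
      · exact Or.inr h.symm
      · exact absurd h (by decide)
      · exact Or.inl h
    left
    refine ⟨f, g, ?_, ?_, hfg⟩
    · apply continuous_generateFrom_iff.mpr
      intro s hs
      simp only [Set.mem_insert_iff, Set.mem_singleton_iff] at hs
      rcases hs with rfl | rfl | rfl
      · apply hup_open
        intro x hx y hxy
        simp only [Set.mem_preimage, Set.mem_singleton_iff] at hx ⊢
        exact hdle0 (f y) (hx ▸ hf x y hxy)
      · apply hup_open
        intro x hx y hxy
        simp only [Set.mem_preimage, Set.mem_insert_iff, Set.mem_singleton_iff] at hx ⊢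
        rcases hx with hx | hx
        · exact Or.inl (hdle0 (f y) (hx ▸ hf x y hxy))
        · exact hdle1 (f y) (hx ▸ hf x y hxy)
      · apply hup_open
        intro x hx y hxy
        simp only [Set.mem_preimage, Set.mem_insert_iff, Set.mem_singleton_iff] at hx ⊢
        rcases hx with hx | hx
        · exact Or.inl (hdle0 (f y) (hx ▸ hf x y hxy))
        · exact hdle2 (f y) (hx ▸ hf x y hxy)
    · have hSup : ∀ V : Set (Fin 4), (∀ i ∈ V, ∀ j, dle i j → j ∈ V) →
          @IsOpen _ topS V := by
        intro V hV
        have hVU : V = ⋃ x ∈ V, {y | dle x y} := by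
          ext y
          simp only [Set.mem_iUnion, exists_prop, Set.mem_setOf_eq]
          constructor
          · intro hy; exact ⟨y, hy, Or.inl rfl⟩
          · rintro ⟨x, hx, hxy⟩; exact hV x hx y hxy
        rw [hVU]
        letI : TopologicalSpace (Fin 4) := topS
        apply isOpen_biUnion
        intro x hx
        fin_cases x
        · show @IsOpen _ topS {y | dle (0 : Fin 4) y}
          have e : {y | dle 0 y} = ({0} : Set (Fin 4)) := by
            ext y
            simp only [Set.mem_setOf_eq, Set.mem_singleton_iff]
            exact ⟨fun h => hdle0 y h, fun h => Or.inl h.symm⟩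
          rw [e]
          exact TopologicalSpace.GenerateOpen.basic _ (by simp)
        · show @IsOpen _ topS {y | dle (1 : Fin 4) y}
          have e : {y | dle 1 y} = ({0, 1} : Set (Fin 4)) := by
            ext y
            simp only [Set.mem_setOf_eq, Set.mem_insert_iff, Set.mem_singleton_iff]
            constructor
            · exact fun h => hdle1 y h
            · rintro (rfl | rfl)
              · exact Or.inr (Or.inr rfl)
              · exact Or.inl rfl
          rw [e]
          exact TopologicalSpace.GenerateOpen.basic _ (by simp)
        · show @IsOpen _ topS {y | dle (2 : Fin 4) y}
          have e : {y | dle 2 y} = ({0, 2} : Set (Fin 4)) := by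
            ext y
            simp only [Set.mem_setOf_eq, Set.mem_insert_iff, Set.mem_singleton_iff]
            constructor
            · exact fun h => hdle2 y h
            · rintro (rfl | rfl)
              · exact Or.inr (Or.inr rfl)
              · exact Or.inl rfl
          rw [e]
          exact TopologicalSpace.GenerateOpen.basic _ (by simp)
        · show @IsOpen _ topS {y | dle (3 : Fin 4) y}
          have e : {y | dle 3 y} = (Set.univ : Set (Fin 4)) := by
            ext y
            simp only [Set.mem_setOf_eq, Set.mem_univ, iff_true]
            exact Or.inr (Or.inl rfl)
          rw [e]
          exact TopologicalSpace.GenerateOpen.univ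
      apply continuous_def.mpr
      intro U hU
      exact hSup _ (fun i hi j hij => hopen_up U hU (g i) hi (g j) (hg i j hij))
  by_cases hA' : ∃ q a b : X, IsMax q ∧ a ≠ b ∧ {y | y ⋖ q} = {a, b} ∧
      minBelow a = minBelow b
  · obtain ⟨q, a, b, h1, h2, h3, h4⟩ := hA'
    obtain ⟨p, c, d, g1, g2, g3, g4⟩ := dual_diamond hdeg' h1 h2 h3 h4
    exact absurd ⟨p, c, d, g1, g2, g3, g4⟩ hA
  · -- crown case
    have HA : ∀ (p a b : X), IsMin p → a ≠ b → {y | p ⋖ y} = {a, b} →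
        maxAbove a ≠ maxAbove b :=
      fun p a b h1 h2 h3 h4 => hA ⟨p, a, b, h1, h2, h3, h4⟩
    have HA' : ∀ (q a b : X), IsMax q → a ≠ b → {y | y ⋖ q} = {a, b} →
        minBelow a ≠ minBelow b :=
      fun q a b h1 h2 h3 h4 => hA' ⟨q, a, b, h1, h2, h3, h4⟩
    obtain ⟨n, hn2, f, g, hf, hg, hfg⟩ := crown_case hdeg' hconn HA HA'
    have hcle1 : ∀ (k : ZMod n) (y : Fin 2 × ZMod n), cle n (1, k) y → y = (1, k) := by
      rintro k y (h | ⟨h0, -, -⟩)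
      · exact h.symm
      · exact absurd h0 (show (1 : Fin 2) ≠ 0 by decide)
    have hcle0 : ∀ (k : ZMod n) (y : Fin 2 × ZMod n), cle n (0, k) y →
        y = (0, k) ∨ y = (1, k) ∨ y = (1, k + 1) := by
      rintro k y (h | ⟨-, h1, (h2 | h2)⟩)
      · exact Or.inl h.symm
      · exact Or.inr (Or.inl (Prod.ext_iff.mpr ⟨h1, h2⟩))
      · exact Or.inr (Or.inr (Prod.ext_iff.mpr ⟨h1, h2⟩))
    right
    refine ⟨n, hn2, f, g, ?_, ?_, hfg⟩
    · apply continuous_generateFrom_iff.mpr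
      intro s hs
      rcases hs with ⟨k, rfl⟩ | ⟨k, rfl⟩
      · apply hup_open
        intro x hx y hxy
        simp only [Set.mem_preimage, Set.mem_singleton_iff] at hx ⊢
        exact hcle1 k (f y) (hx ▸ hf x y hxy)
      · apply hup_open
        intro x hx y hxy
        simp only [Set.mem_preimage, Set.mem_insert_iff, Set.mem_singleton_iff] at hx ⊢
        rcases hx with hx | hx | hx
        · exact hcle0 k (f y) (hx ▸ hf x y hxy)
        · exact Or.inr (Or.inl (hcle1 k (f y) (hx ▸ hf x y hxy)))
        · exact Or.inr (Or.inr (hcle1 (k + 1) (f y) (hx ▸ hf x y hxy)))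
    · have hCup : ∀ V : Set (Fin 2 × ZMod n), (∀ i ∈ V, ∀ j, cle n i j → j ∈ V) →
          @IsOpen _ (topC n) V := by
        intro V hV
        have hVU : V = ⋃ x ∈ V, {y | cle n x y} := by
          ext y
          simp only [Set.mem_iUnion, exists_prop, Set.mem_setOf_eq]
          constructor
          · intro hy; exact ⟨y, hy, Or.inl rfl⟩
          · rintro ⟨x, hx, hxy⟩; exact hV x hx y hxy
        rw [hVU]
        letI : TopologicalSpace (Fin 2 × ZMod n) := topC n
        apply isOpen_biUnion
        rintro ⟨c, k⟩ hx
        by_cases hc : c = 0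
        · subst hc
          have e : {y | cle n (0, k) y} =
              ({(0, k), (1, k), (1, k + 1)} : Set (Fin 2 × ZMod n)) := by
            ext y
            simp only [Set.mem_setOf_eq, Set.mem_insert_iff, Set.mem_singleton_iff]
            constructor
            · exact fun h => hcle0 k y h
            · rintro (rfl | rfl | rfl)
              · exact Or.inl rfl
              · exact Or.inr ⟨rfl, rfl, Or.inl rfl⟩
              · exact Or.inr ⟨rfl, rfl, Or.inr rfl⟩
          rw [e]
          exact TopologicalSpace.GenerateOpen.basic _ (Or.inr ⟨k, rfl⟩)
        · have hc1 : c = 1 := by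
            have hlt2 := c.isLt
            have h0 : c.val ≠ 0 := fun h => hc (Fin.ext h)
            exact Fin.ext (by simp; omega)
          subst hc1
          have e : {y | cle n (1, k) y} = ({(1, k)} : Set (Fin 2 × ZMod n)) := by
            ext y
            simp only [Set.mem_setOf_eq, Set.mem_singleton_iff]
            exact ⟨fun h => hcle1 k y h, fun h => Or.inl h.symm⟩
          rw [e]
          exact TopologicalSpace.GenerateOpen.basic _ (Or.inl ⟨k, rfl⟩)
      apply continuous_def.mpr
      intro U hU
      exact hCup _ (fun i hi j hij => hopen_up U hU (g i) hi (g j) (hg i j hij))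

end Topo

/-- If `X` is a finite connected T0-space in which every vertex of the Hasse diagram has
unoriented degree `2`, then there are a space `Y`, either `S` or `C_n` for some `n ≥ 2`,
and continuous maps `f : X → Y`, `g : Y → X` with `f ∘ g = id`. -/
theorem stmt10 {X : Type*} [tX : TopologicalSpace X] [Finite X] [T0Space X] [ConnectedSpace X]
    (hdeg : ∀ x : X, hasseDeg x = 2) :
    (∃ f : X → Fin 4, ∃ g : Fin 4 → X,
      @Continuous X (Fin 4) tX topS f ∧ @Continuous (Fin 4) X topS tX g ∧ f ∘ g = id) ∨
    ∃ n : ℕ, 2 ≤ n ∧ ∃ f : X → Fin 2 × ZMod n, ∃ g : Fin 2 × ZMod n → X,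
      @Continuous X (Fin 2 × ZMod n) tX (topC n) f ∧
      @Continuous (Fin 2 × ZMod n) X (topC n) tX g ∧ f ∘ g = id := by
  exact stmt10' hdeg
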